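/- arXiv:2605.25965 — 5 statements merged into one kernel-verified Lean document; each statement's English description precedes it below -/
import Mathlib

section
/- Let V be a persistence module over a field F which is q-tame (every structure map π_{st} with s < t has finite rank) and bounded from below (there is s₀ ∈ ℝ with V_s = 0 for all s < s₀). Suppose V is isomorphic, as a persistence module, to a direct sum ⨁_{i∈I} F_{(a_i,b_i]} of interval modules, where a_i ∈ ℝ and b_i ∈ (a_i, ∞] for each i in an index set I. Then for every ε > 0 and every s ∈ ℝ, the set {i ∈ I : a_i < s and b_i − a_i > ε} is finite (with the convention ∞ − a = ∞). -/
open scoped Classical DirectSum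

noncomputable section

universe u v

/-- A persistence module over a field `F`: a family of `F`-vector spaces indexed by `ℝ`
together with functorial structure maps. -/
structure PersistenceModule (F : Type u) [Field F] where
  space : ℝ → Type v
  [instAddCommGroup : ∀ s, AddCommGroup (space s)]
  [instModule : ∀ s, Module F (space s)]
  map : ∀ {s t : ℝ}, s ≤ t → (space s →ₗ[F] space t)
  map_id : ∀ s : ℝ, map (le_refl s) = LinearMap.id
  map_comp : ∀ {s t r : ℝ} (hst : s ≤ t) (htr : t ≤ r),
    (map htr).comp (map hst) = map (hst.trans htr)

attribute [instance] PersistenceModule.instAddCommGroup PersistenceModule.instModule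

/-- The fibre at `s` of the interval module `F_{(a,b]}`: all of `F` if `a < s ≤ b`, zero
otherwise. -/
def intervalCarrier (F : Type u) [Field F] (a : ℝ) (b : EReal) (s : ℝ) : Submodule F F where
  carrier := {x : F | (a < s ∧ (s : EReal) ≤ b) ∨ x = 0}
  add_mem' := by
    intro x y hx hy
    rcases hx with h | hx0
    · exact Or.inl h
    rcases hy with h | hy0
    · exact Or.inl h
    · exact Or.inr (by rw [hx0, hy0, add_zero])
  zero_mem' := Or.inr rfl
  smul_mem' := by
    intro c x hx
    rcases hx with h | hx0
    · exact Or.inl h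
    · exact Or.inr (by rw [hx0, smul_zero])

/-- The interval persistence module `F_{(a,b]}` (with `b ∈ ℝ ∪ {∞}` an extended real). -/
def IntervalModule (F : Type u) [Field F] (a : ℝ) (b : EReal) : PersistenceModule F where
  space s := intervalCarrier F a b s
  map {s t} h :=
    { toFun := fun x => ⟨if a < t ∧ (t : EReal) ≤ b then (x : F) else 0, by
        by_cases hc : a < t ∧ (t : EReal) ≤ b
        · rw [if_pos hc]; exact Or.inl hc
        · rw [if_neg hc]; exact Or.inr rfl⟩
      map_add' := by
        intro x y
        apply Subtype.ext
        by_cases hc : a < t ∧ (t : EReal) ≤ b <;> simp [hc]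
      map_smul' := by
        intro c x
        apply Subtype.ext
        by_cases hc : a < t ∧ (t : EReal) ≤ b <;> simp [hc] }
  map_id := by
    intro s
    apply LinearMap.ext; intro x
    apply Subtype.ext
    have hx : (a < s ∧ (s : EReal) ≤ b) ∨ (x : F) = 0 := x.2
    by_cases hc : a < s ∧ (s : EReal) ≤ b
    · simp [hc]
    · rcases hx with h | h
      · exact absurd h hc
      · simp [hc, h]
  map_comp := by
    intro s t r hst htr
    apply LinearMap.ext; intro x
    apply Subtype.ext
    have hx : (a < s ∧ (s : EReal) ≤ b) ∨ (x : F) = 0 := x.2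
    by_cases hr : a < r ∧ (r : EReal) ≤ b
    · by_cases ht : a < t ∧ (t : EReal) ≤ b
      · simp [hr, ht]
      · rcases hx with hs | hx0
        · exact absurd ⟨lt_of_lt_of_le hs.1 hst,
            le_trans (EReal.coe_le_coe_iff.mpr htr) hr.2⟩ ht
        · simp [hr, ht, hx0]
    · simp [hr]

/-- `V` is isomorphic, as a persistence module, to the direct sum of the interval modules
`F_{(a i, b i]}`, `i ∈ I`: there are linear equivalences at each filtration level commuting
with the structure maps (those of the direct sum acting componentwise). -/
def IsIsoToIntervalSum {F : Type u} [Field F] (V : PersistenceModule F)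
    {I : Type} (a : I → ℝ) (b : I → EReal) : Prop :=
  ∃ e : ∀ s : ℝ, V.space s ≃ₗ[F] (⨁ i : I, (IntervalModule F (a i) (b i)).space s),
    ∀ (s t : ℝ) (h : s ≤ t) (v : V.space s) (i : I),
      (e t (V.map h v)) i = (IntervalModule F (a i) (b i)).map h ((e s v) i)

lemma key_finite (F : Type u) [Field F] (V : PersistenceModule F)
    {I : Type} (a : I → ℝ) (b : I → EReal)
    (hiso : IsIsoToIntervalSum V a b)
    (u w : ℝ) (huw : u < w)
    (hrank : LinearMap.rank (V.map huw.le) < Cardinal.aleph0) :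
    {i : I | a i < u ∧ (w : EReal) ≤ b i}.Finite := by
  obtain ⟨e, he⟩ := hiso
  set T := {i : I | a i < u ∧ (w : EReal) ≤ b i} with hT
  rw [← Set.not_infinite]
  intro hinf
  haveI : Infinite T := hinf.to_subtype
  -- the nonzero element of the interval carrier at u, for i ∈ T
  have hxmem : ∀ i : T, (1 : F) ∈ intervalCarrier F (a i.1) (b i.1) u :=
    fun i => Or.inl ⟨i.2.1, le_trans (EReal.coe_le_coe_iff.mpr huw.le) i.2.2⟩
  have hymem : ∀ i : T, (1 : F) ∈ intervalCarrier F (a i.1) (b i.1) w :=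
    fun i => Or.inl ⟨lt_trans i.2.1 huw, i.2.2⟩
  set x : ∀ i : T, (IntervalModule F (a i.1) (b i.1)).space u :=
    fun i => ⟨1, hxmem i⟩ with hx
  set y : ∀ i : T, (IntervalModule F (a i.1) (b i.1)).space w :=
    fun i => ⟨1, hymem i⟩ with hy
  set v : T → V.space u :=
    fun i => (e u).symm (DirectSum.lof F I
      (fun j => (IntervalModule F (a j) (b j)).space u) i.1 (x i)) with hv
  have hcond : ∀ i : T, a i.1 < w ∧ (w : EReal) ≤ b i.1 := fun i => ⟨lt_trans i.2.1 huw, i.2.2⟩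
  -- image under e w of f (v i) is lof i (y i)
  have himg : ∀ i : T, e w (V.map huw.le (v i)) =
      DirectSum.lof F I (fun j => (IntervalModule F (a j) (b j)).space w) i.1 (y i) := by
    intro i
    apply DFinsupp.ext
    intro j
    rw [he u w huw.le (v i) j]
    have heu : e u (v i) = DirectSum.lof F I
        (fun j => (IntervalModule F (a j) (b j)).space u) i.1 (x i) :=
      (e u).apply_symm_apply _
    rw [heu]
    by_cases hj : i.1 = j
    · subst hj
      rw [DirectSum.lof_apply, DirectSum.lof_apply]
      apply Subtype.ext
      simp [IntervalModule, hcond i, hx, hy]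
      rfl
    · rw [DirectSum.lof_eq_of, DirectSum.lof_eq_of,
        DirectSum.of_eq_of_ne _ _ _ (Ne.symm hj), DirectSum.of_eq_of_ne _ _ _ (Ne.symm hj)]
      exact map_zero _
  -- the family lof i (y i) is linearly independent
  have hli : LinearIndependent F (fun i : T => DirectSum.lof F I
      (fun j => (IntervalModule F (a j) (b j)).space w) i.1 (y i)) := by
    rw [linearIndependent_iff']
    intro s g hsum i hi
    have := congrArg (DirectSum.component F I
      (fun j => (IntervalModule F (a j) (b j)).space w) i.1) hsum
    rw [map_sum, map_zero] at this
    rw [Finset.sum_eq_single i] at this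
    · rw [map_smul, DirectSum.component.lof_self] at this
      have : g i * 1 = 0 := congrArg Subtype.val this
      simpa using this
    · intro j _ hji
      rw [map_smul, DirectSum.component.of]
      rw [dif_neg (fun h => hji (Subtype.ext h))]
      exact smul_zero _
    · intro h; exact absurd hi h
  -- transfer linear independence to the range of the structure map
  have hli2 : LinearIndependent F (fun i : T => V.map huw.le (v i)) := by
    refine LinearIndependent.of_comp (e w).toLinearMap ?_
    convert hli using 1
    funext i
    exact himg i
  have hli3 : LinearIndependent F (fun i : T =>
      (⟨V.map huw.le (v i), LinearMap.mem_range_self _ _⟩ :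
        LinearMap.range (V.map huw.le))) := by
    refine LinearIndependent.of_comp (LinearMap.range (V.map huw.le)).subtype ?_
    exact hli2
  exact absurd hrank (not_lt.mpr (hli3.aleph0_le_rank))

/-- a q-tame, bounded-below persistence module isomorphic to a direct sum of
interval modules `F_{(a i, b i]}` has, for every `ε > 0` and `s ∈ ℝ`, only finitely many
bars of length `> ε` beginning below `s`. -/
theorem stmt0 (F : Type u) [Field F] (V : PersistenceModule F)
    (hqtame : ∀ (s t : ℝ) (h : s < t), LinearMap.rank (V.map h.le) < Cardinal.aleph0)
    (hbdd : ∃ s₀ : ℝ, ∀ s : ℝ, s < s₀ → ∀ v : V.space s, v = 0)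
    {I : Type} (a : I → ℝ) (b : I → EReal) (hab : ∀ i, (a i : EReal) < b i)
    (hiso : IsIsoToIntervalSum V a b)
    (ε : ℝ) (hε : 0 < ε) (s : ℝ) :
    {i : I | a i < s ∧ (ε : EReal) < b i - (a i : EReal)}.Finite := by
  obtain ⟨s₀, hs₀⟩ := hbdd
  -- all bars start at or above s₀
  have hlow : ∀ i, s₀ ≤ a i := by
    obtain ⟨e, he⟩ := hiso
    intro i
    by_contra h
    push_neg at h
    have hm : ((a i : ℝ) : EReal) < min ((s₀ : ℝ) : EReal) (b i) :=
      lt_min (EReal.coe_lt_coe_iff.mpr h) (hab i)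
    obtain ⟨t, ht1, ht2⟩ := EReal.exists_between_coe_real hm
    have ht1' : a i < t := EReal.coe_lt_coe_iff.mp ht1
    have hts : t < s₀ := EReal.coe_lt_coe_iff.mp ((lt_min_iff.mp ht2).1)
    have htb : (t : EReal) ≤ b i := ((lt_min_iff.mp ht2).2).le
    set z : V.space t := (e t).symm (DirectSum.lof F I
      (fun j => (IntervalModule F (a j) (b j)).space t) i ⟨1, Or.inl ⟨ht1', htb⟩⟩)
    have hz : z = 0 := hs₀ t hts z
    have : DirectSum.lof F I
        (fun j => (IntervalModule F (a j) (b j)).space t) i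
        (⟨1, Or.inl ⟨ht1', htb⟩⟩ : (IntervalModule F (a i) (b i)).space t) = 0 := by
      rw [← (e t).apply_symm_apply (DirectSum.lof F I
        (fun j => (IntervalModule F (a j) (b j)).space t) i ⟨1, Or.inl ⟨ht1', htb⟩⟩)]
      rw [show (e t).symm _ = z from rfl, hz, map_zero]
    have h1 : (⟨1, Or.inl ⟨ht1', htb⟩⟩ : (IntervalModule F (a i) (b i)).space t) = 0 := by
      have h2 := congrArg
        (fun f : ⨁ j : I, (IntervalModule F (a j) (b j)).space t => f i) this
      exact (DirectSum.lof_apply (R := F) (M := fun j => (IntervalModule F (a j) (b j)).space t) i _).symm.trans h2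
    exact one_ne_zero (congrArg Subtype.val h1)
  have hε2 : (0 : ℝ) < ε / 2 := half_pos hε
  set u : ℕ → ℝ := fun k => s₀ + (k + 1) * (ε / 2) with hu
  have hfin : ∀ k : ℕ, {i : I | a i < u k ∧ ((u k + ε / 2 : ℝ) : EReal) ≤ b i}.Finite := by
    intro k
    have huw : u k < u k + ε / 2 := lt_add_of_pos_right _ hε2
    exact key_finite F V a b hiso (u k) (u k + ε / 2) huw (hqtame _ _ huw)
  set n := ⌊(s - s₀) / (ε / 2)⌋₊ + 1 with hn
  refine Set.Finite.subset (Set.Finite.biUnion (Finset.range n).finite_toSet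
    (fun k _ => hfin k)) ?_
  intro i hi
  obtain ⟨his, hlen⟩ := hi
  set k := ⌊(a i - s₀) / (ε / 2)⌋₊ with hk
  have hnonneg : 0 ≤ (a i - s₀) / (ε / 2) := div_nonneg (by linarith [hlow i]) hε2.le
  have hkle : (k : ℝ) ≤ (a i - s₀) / (ε / 2) := Nat.floor_le hnonneg
  have hklt : (a i - s₀) / (ε / 2) < k + 1 := Nat.lt_floor_add_one _
  have hkn : k < n := by
    have : k ≤ ⌊(s - s₀) / (ε / 2)⌋₊ :=
      Nat.floor_le_floor ((div_le_div_iff_of_pos_right hε2).mpr (by linarith))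
    omega
  refine Set.mem_biUnion (Finset.mem_coe.mpr (Finset.mem_range.mpr hkn)) ?_
  have hmul1 : a i - s₀ < (k + 1) * (ε / 2) := (div_lt_iff₀ hε2).mp hklt
  have hmul2 : (k : ℝ) * (ε / 2) ≤ a i - s₀ := (le_div_iff₀ hε2).mp hkle
  constructor
  · show a i < u k
    simp only [hu]
    nlinarith
  · show ((u k + ε / 2 : ℝ) : EReal) ≤ b i
    have h2 : u k + ε / 2 ≤ a i + ε := by
      simp only [hu]; nlinarith
    have h3 : ((a i + ε : ℝ) : EReal) < b i := by
      rw [EReal.coe_add, add_comm]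
      exact (EReal.lt_sub_iff_add_lt (Or.inl (EReal.coe_ne_bot _))
        (Or.inl (EReal.coe_ne_top _))).mp hlen
    exact le_of_lt (lt_of_le_of_lt (EReal.coe_le_coe_iff.mpr h2) h3)

end
end

section
/- Let ε > 0 and s₀, s ∈ ℝ. Suppose (a_n)_{n∈ℕ} is a sequence of real numbers and (b_n)_{n∈ℕ} a sequence in ℝ ∪ {∞} such that s₀ ≤ a_n < s and b_n − a_n > ε for every n (with the convention ∞ − a = ∞). Then there exist real numbers t′ < t such that the set {n ∈ ℕ : a_n < t′ and t ≤ b_n} (i.e., the set of n with [t′, t] ⊆ (a_n, b_n]) is infinite. -/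
/-- an infinite family of half-open intervals `(a n, b n]` (with `b n` an
extended real), all beginning in `[s₀, s)` and all of length greater than `ε > 0`, admits a
common closed subinterval `[t', t]` contained in infinitely many of them. -/
theorem stmt1 (ε s₀ s : ℝ) (hε : 0 < ε) (a : ℕ → ℝ) (b : ℕ → EReal)
    (ha : ∀ n, s₀ ≤ a n) (has : ∀ n, a n < s)
    (hb : ∀ n, (ε : EReal) < b n - (a n : EReal)) :
    ∃ t' t : ℝ, t' < t ∧ {n : ℕ | a n < t' ∧ (t : EReal) ≤ b n}.Infinite := by
  set δ := ε / 2 with hδdef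
  have hδ : 0 < δ := by positivity
  set g : ℕ → Set.Icc ⌊s₀ / δ⌋ ⌊s / δ⌋ := fun n =>
    ⟨⌊a n / δ⌋, Int.floor_le_floor (by gcongr; exact ha n),
      Int.floor_le_floor (by gcongr; exact (has n).le)⟩ with hg
  obtain ⟨y, hk⟩ := Finite.exists_infinite_fiber g
  set k : ℤ := y.1 with hkdef
  rw [Set.infinite_coe_iff] at hk
  refine ⟨(k + 1) * δ, k * δ + ε, by nlinarith, ?_⟩
  refine hk.mono ?_
  rintro n hn
  have hfl : ⌊a n / δ⌋ = k := by rw [hkdef, ← hn]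
  have h1 : (k : ℝ) * δ ≤ a n := by
    rw [← hfl]
    have := Int.floor_le (a n / δ)
    calc (⌊a n / δ⌋ : ℝ) * δ ≤ (a n / δ) * δ := by nlinarith
    _ = a n := by field_simp
  have h2 : a n < (k + 1) * δ := by
    rw [← hfl]
    have := Int.lt_floor_add_one (a n / δ)
    calc a n = (a n / δ) * δ := by field_simp
    _ < (⌊a n / δ⌋ + 1) * δ := by nlinarith
    _ = ((⌊a n / δ⌋ : ℝ) + 1) * δ := by ring
  refine ⟨h2, ?_⟩
  have hbn : ((a n : ℝ) : EReal) + (ε : EReal) < b n := by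
    have := (EReal.lt_sub_iff_add_lt (b := (a n : EReal)) (c := (ε : EReal))
      (.inl (EReal.coe_ne_bot _)) (.inl (EReal.coe_ne_top _))).1 (hb n)
    simpa [add_comm] using this
  calc ((k : ℝ) * δ + ε : ℝ) ≤ ((a n + ε : ℝ) : EReal) := by
        exact_mod_cast EReal.coe_le_coe_iff.2 (by linarith)
    _ ≤ b n := by rw [EReal.coe_add] at *; exact hbn.le
end

section
/- Let V be a persistence module over a field F satisfying conditions (PM1)–(PM4). Fix an interval I = (a,b] with −∞ < a < b ≤ ∞. For c ∈ (a,b) define, using the birth and death functions α, β on V_c, the subspaces A = {v ∈ V_c : α(v) ≤ a and β(v) ≤ b}, B = {v ∈ V_c : α(v) < a and β(v) ≤ b}, C = {v ∈ V_c : α(v) ≤ a and β(v) < b}, and set n_I(c) := dim_F A/(B + C). Then A is finite-dimensional (so n_I(c) < ∞), and n_I(c) = n_I(c′) for all c, c′ ∈ (a,b); that is, the multiplicity n_I of the bar I is well defined independently of the choice of c ∈ (a,b). -/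
open scoped Classical

noncomputable section

universe u v

/-- The birth function `α : V_c → [-∞, c)`:
`α(v) = inf {s < c | v ∈ im (π_{s c})}`, as an extended real number. -/
noncomputable def birth {F : Type u} [Field F] (V : PersistenceModule F) (c : ℝ)
    (v : V.space c) : EReal :=
  sInf {x : EReal | ∃ (s : ℝ) (h : s < c), x = (s : EReal) ∧
    v ∈ LinearMap.range (V.map h.le)}

/-- The death function `β : V_c → [c, ∞]`:
`β(v) = inf {s ≥ c | v ∈ ker (π_{c s})}`, as an extended real number (with `inf ∅ = ∞`). -/
noncomputable def death {F : Type u} [Field F] (V : PersistenceModule F) (c : ℝ)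
    (v : V.space c) : EReal :=
  sInf {x : EReal | ∃ (s : ℝ) (h : c ≤ s), x = (s : EReal) ∧ V.map h v = 0}

namespace Stmt4Aux

variable {F : Type u} [Field F] (V : PersistenceModule F)

lemma map_map {s t r : ℝ} (hst : s ≤ t) (htr : t ≤ r) (v : V.space s) :
    V.map htr (V.map hst v) = V.map (hst.trans htr) v :=
  LinearMap.congr_fun (V.map_comp hst htr) v

lemma range_mono {s s' c : ℝ} (h : s ≤ s') (h2 : s' ≤ c) :
    LinearMap.range (V.map (h.trans h2)) ≤ LinearMap.range (V.map h2) := by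
  rintro v ⟨u, rfl⟩
  exact ⟨V.map h u, map_map V h h2 u⟩

lemma birth_le {c : ℝ} {s : ℝ} (h : s < c) {v : V.space c}
    (hv : v ∈ LinearMap.range (V.map h.le)) : birth V c v ≤ (s : EReal) :=
  sInf_le ⟨s, h, rfl, hv⟩

lemma death_le {c : ℝ} {s : ℝ} (h : c ≤ s) {v : V.space c}
    (hv : V.map h v = 0) : death V c v ≤ (s : EReal) :=
  sInf_le ⟨s, h, rfl, hv⟩

lemma mem_range_of_birth_le {a c : ℝ} {v : V.space c} (hb : birth V c v ≤ (a : EReal))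
    {s : ℝ} (has : a < s) (hsc : s < c) : v ∈ LinearMap.range (V.map hsc.le) := by
  have hlt : birth V c v < (s : EReal) :=
    lt_of_le_of_lt hb (by exact_mod_cast has)
  obtain ⟨x, hx, hxs⟩ := sInf_lt_iff.mp hlt
  obtain ⟨t, htc, rfl, hv⟩ := hx
  have hts : t ≤ s := by exact_mod_cast hxs.le
  exact range_mono V hts hsc.le hv

lemma EReal_le_of_forall {x : EReal} {a s₁ : ℝ} (h : a < s₁)
    (H : ∀ s : ℝ, a < s → s < s₁ → x ≤ (s : EReal)) : x ≤ (a : EReal) := by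
  by_contra h'
  push_neg at h'
  have hlt : (a : EReal) < min x (s₁ : EReal) := lt_min h' (by exact_mod_cast h)
  obtain ⟨y, hy1, hy2⟩ := EReal.exists_between_coe_real hlt
  have hya : a < y := by exact_mod_cast hy1
  have hyx : (y : EReal) < x := hy2.trans_le (min_le_left _ _)
  have hys : y < s₁ := by exact_mod_cast hy2.trans_le (min_le_right _ _)
  exact absurd (H y hya hys) (not_le.mpr hyx)

lemma birth_map_le {c c' : ℝ} (hcc' : c ≤ c') (v : V.space c) :
    birth V c' (V.map hcc' v) ≤ birth V c v := by
  apply sInf_le_sInf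
  rintro x ⟨s, hsc, rfl, u, rfl⟩
  exact ⟨s, lt_of_lt_of_le hsc hcc', rfl, u, (map_map V hsc.le hcc' u).symm⟩

lemma death_le_death_map {c c' : ℝ} (hcc' : c ≤ c') (w : V.space c) :
    death V c w ≤ death V c' (V.map hcc' w) := by
  apply sInf_le_sInf
  rintro x ⟨s, hs, rfl, hzero⟩
  refine ⟨s, hcc'.trans hs, rfl, ?_⟩
  rw [← map_map V hcc' hs]
  exact hzero

lemma death_map_le_of_le {c c' : ℝ} (hcc' : c ≤ c') {b : EReal} (hc'b : (c' : EReal) < b)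
    {v : V.space c} (hv : death V c v ≤ b) : death V c' (V.map hcc' v) ≤ b := by
  by_cases h : ∃ (s : ℝ) (hs : c ≤ s), s < c' ∧ V.map hs v = 0
  · obtain ⟨s, hs, hsc', h0⟩ := h
    have hz : V.map hcc' v = (0 : V.space c') := by
      rw [← map_map V hs hsc'.le, h0, map_zero]
    have hle : death V c' (V.map hcc' v) ≤ (c' : EReal) :=
      death_le V (le_refl c') (by rw [hz, map_zero])
    exact hle.trans hc'b.le
  · push_neg at h
    refine le_trans (sInf_le_sInf ?_) hv
    rintro x ⟨s, hs, rfl, h0⟩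
    have hc's : c' ≤ s := by
      by_contra hlt
      exact h s hs (not_le.mp hlt) h0
    refine ⟨s, hc's, rfl, ?_⟩
    rw [map_map V hcc' hc's]
    exact h0

lemma death_map_lt_of_lt {c c' : ℝ} (hcc' : c ≤ c') {b : EReal} (hc'b : (c' : EReal) < b)
    {v : V.space c} (hv : death V c v < b) : death V c' (V.map hcc' v) < b := by
  obtain ⟨x, hx, hxb⟩ := sInf_lt_iff.mp hv
  obtain ⟨t, ht, rfl, h0⟩ := hx
  rcases le_total c' t with h1 | h1
  · refine lt_of_le_of_lt (death_le V h1 ?_) hxb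
    rw [map_map V hcc' h1]
    exact h0
  · have hz : V.map hcc' v = (0 : V.space c') := by
      rw [← map_map V ht h1, h0, map_zero]
    exact lt_of_le_of_lt (death_le V (le_refl c') (by rw [hz, map_zero])) hc'b

lemma fd_range (hPM2 : ∀ (s t : ℝ) (h : s < t), LinearMap.rank (V.map h.le) < Cardinal.aleph0)
    {s c : ℝ} (h : s < c) : FiniteDimensional F (LinearMap.range (V.map h.le)) :=
  IsNoetherian.iff_fg.mp (IsNoetherian.iff_rank_lt_aleph0.mpr (hPM2 s c h))

lemma stable_range
    (hPM2 : ∀ (s t : ℝ) (h : s < t), LinearMap.rank (V.map h.le) < Cardinal.aleph0)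
    {a c : ℝ} (hac : a < c) :
    ∃ (s₁ : ℝ) (h1 : a < s₁) (h2 : s₁ < c), ∀ (s : ℝ), a < s → ∀ (hsc : s < c), s ≤ s₁ →
      LinearMap.range (V.map hsc.le) = LinearMap.range (V.map h2.le) := by
  set T : Set ℕ := {n | ∃ (s : ℝ) (_ : a < s) (h2 : s < c),
    n = Module.finrank F (LinearMap.range (V.map h2.le))} with hT
  have hTne : T.Nonempty :=
    ⟨_, (a + c) / 2, by linarith, by linarith, rfl⟩
  obtain ⟨s₁, h1, h2, heq⟩ := Nat.sInf_mem hTne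
  refine ⟨s₁, h1, h2, fun s has hsc hss₁ => ?_⟩
  have hle : LinearMap.range (V.map hsc.le) ≤ LinearMap.range (V.map h2.le) :=
    range_mono V hss₁ h2.le
  haveI := fd_range V hPM2 h2
  refine Submodule.eq_of_le_of_finrank_le hle ?_
  rw [← heq]
  exact Nat.sInf_le ⟨s, has, hsc, rfl⟩


lemma key
    (hPM2 : ∀ (s t : ℝ) (h : s < t), LinearMap.rank (V.map h.le) < Cardinal.aleph0)
    {a : ℝ} {b : EReal} {c c' : ℝ} (hcc' : c ≤ c')
    (hc1 : a < c) (hc'2 : (c' : EReal) < b)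
    (A B C : Submodule F (V.space c))
    (hA : (A : Set (V.space c)) = {v | birth V c v ≤ (a : EReal) ∧ death V c v ≤ b})
    (hB : (B : Set (V.space c)) = {v | birth V c v < (a : EReal) ∧ death V c v ≤ b})
    (hC : (C : Set (V.space c)) = {v | birth V c v ≤ (a : EReal) ∧ death V c v < b})
    (A' B' C' : Submodule F (V.space c'))
    (hA' : (A' : Set (V.space c')) = {v | birth V c' v ≤ (a : EReal) ∧ death V c' v ≤ b})
    (hB' : (B' : Set (V.space c')) = {v | birth V c' v < (a : EReal) ∧ death V c' v ≤ b})
    (hC' : (C' : Set (V.space c')) = {v | birth V c' v ≤ (a : EReal) ∧ death V c' v < b}) :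
    Nonempty ((↥A ⧸ Submodule.comap A.subtype (B ⊔ C)) ≃ₗ[F]
      (↥A' ⧸ Submodule.comap A'.subtype (B' ⊔ C'))) := by
  have hAm : ∀ v, v ∈ A ↔ birth V c v ≤ (a : EReal) ∧ death V c v ≤ b := fun v =>
    Set.ext_iff.mp hA v
  have hBm : ∀ v, v ∈ B ↔ birth V c v < (a : EReal) ∧ death V c v ≤ b := fun v =>
    Set.ext_iff.mp hB v
  have hCm : ∀ v, v ∈ C ↔ birth V c v ≤ (a : EReal) ∧ death V c v < b := fun v =>
    Set.ext_iff.mp hC v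
  have hA'm : ∀ v, v ∈ A' ↔ birth V c' v ≤ (a : EReal) ∧ death V c' v ≤ b := fun v =>
    Set.ext_iff.mp hA' v
  have hB'm : ∀ v, v ∈ B' ↔ birth V c' v < (a : EReal) ∧ death V c' v ≤ b := fun v =>
    Set.ext_iff.mp hB' v
  have hC'm : ∀ v, v ∈ C' ↔ birth V c' v ≤ (a : EReal) ∧ death V c' v < b := fun v =>
    Set.ext_iff.mp hC' v
  obtain ⟨s₁, hs1a, hs1c, hstab⟩ := stable_range V hPM2 hc1
  -- the exact lifting property for vectors of birth ≤ a
  have lift_le : ∀ v' : V.space c', birth V c' v' ≤ (a : EReal) →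
      ∃ v : V.space c, V.map hcc' v = v' ∧ birth V c v ≤ (a : EReal) ∧
        death V c v ≤ death V c' v' := by
    intro v' hb'
    have hs1c' : s₁ < c' := hs1c.trans_le hcc'
    obtain ⟨u, hu⟩ := mem_range_of_birth_le V hb' hs1a hs1c'
    refine ⟨V.map hs1c.le u, ?_, ?_, ?_⟩
    · rw [map_map V hs1c.le hcc']
      exact hu
    · refine EReal_le_of_forall hs1a (fun s has hss₁ => ?_)
      have hsc : s < c := hss₁.trans hs1c
      refine birth_le V hsc ?_
      rw [hstab s has hsc hss₁.le]
      exact ⟨u, rfl⟩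
    · have h := death_le_death_map V hcc' (V.map hs1c.le u)
      rwa [map_map V hs1c.le hcc', hu] at h
  -- lifting B' and C'
  have liftB : ∀ v' ∈ B', ∃ v ∈ B, V.map hcc' v = v' := by
    intro v' hv'
    obtain ⟨hbirth, hdeath⟩ := (hB'm v').mp hv'
    obtain ⟨x, hx, hxa⟩ := sInf_lt_iff.mp hbirth
    obtain ⟨t, htc', rfl, u, rfl⟩ := hx
    have hta : t < a := by exact_mod_cast hxa
    have htc : t < c := hta.trans hc1
    refine ⟨V.map htc.le u, ?_, ?_⟩
    · refine (hBm _).mpr ⟨lt_of_le_of_lt (birth_le V htc ⟨u, rfl⟩) (by exact_mod_cast hta), ?_⟩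
      have h := death_le_death_map V hcc' (V.map htc.le u)
      rw [map_map V htc.le hcc'] at h
      exact h.trans hdeath
    · rw [map_map V htc.le hcc']
  have liftC : ∀ v' ∈ C', ∃ v ∈ C, V.map hcc' v = v' := by
    intro v' hv'
    obtain ⟨hbirth, hdeath⟩ := (hC'm v').mp hv'
    obtain ⟨v, hπv, hbv, hdv⟩ := lift_le v' hbirth
    exact ⟨v, (hCm v).mpr ⟨hbv, hdv.trans_lt hdeath⟩, hπv⟩
  -- the map A → A'
  have hmapA : ∀ x : ↥A, V.map hcc' (x : V.space c) ∈ A' := by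
    rintro ⟨v, hv⟩
    obtain ⟨hbv, hdv⟩ := (hAm v).mp hv
    exact (hA'm _).mpr ⟨(birth_map_le V hcc' v).trans hbv,
      death_map_le_of_le V hcc' hc'2 hdv⟩
  set Q' := Submodule.comap A'.subtype (B' ⊔ C') with hQ'
  set g : ↥A →ₗ[F] ↥A' :=
    LinearMap.codRestrict A' ((V.map hcc').comp A.subtype) hmapA with hg
  set f : ↥A →ₗ[F] (↥A' ⧸ Q') := Q'.mkQ.comp g with hf
  have hsurj : Function.Surjective f := by
    intro y
    obtain ⟨⟨v', hv'A⟩, rfl⟩ := Q'.mkQ_surjective y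
    obtain ⟨hbv', hdv'⟩ := (hA'm v').mp hv'A
    obtain ⟨v, hπv, hbv, hdv⟩ := lift_le v' hbv'
    refine ⟨⟨v, (hAm v).mpr ⟨hbv, hdv.trans hdv'⟩⟩, ?_⟩
    have hgv : g ⟨v, (hAm v).mpr ⟨hbv, hdv.trans hdv'⟩⟩ = ⟨v', hv'A⟩ :=
      Subtype.ext hπv
    rw [hf, LinearMap.comp_apply, hgv]
  have hker : LinearMap.ker f = Submodule.comap A.subtype (B ⊔ C) := by
    ext x
    obtain ⟨v, hvA⟩ := x
    have hlhs : (⟨v, hvA⟩ : ↥A) ∈ LinearMap.ker f ↔ V.map hcc' v ∈ B' ⊔ C' := by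
      rw [hf, LinearMap.mem_ker, LinearMap.comp_apply, Submodule.mkQ_apply,
        Submodule.Quotient.mk_eq_zero, hQ', Submodule.mem_comap]
      exact Iff.rfl
    rw [hlhs, Submodule.mem_comap]
    show (V.map hcc') v ∈ B' ⊔ C' ↔ v ∈ B ⊔ C
    constructor
    · intro h
      obtain ⟨x, hx, y, hy, hxy⟩ := Submodule.mem_sup.mp h
      obtain ⟨wB, hwB, hπB⟩ := liftB x hx
      obtain ⟨wC, hwC, hπC⟩ := liftC y hy
      have hu : V.map hcc' (v - wB - wC) = 0 := by
        rw [map_sub, map_sub, hπB, hπC, ← hxy]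
        abel
      have huC : v - wB - wC ∈ C := by
        refine (hCm _).mpr ⟨?_, ?_⟩
        · refine EReal_le_of_forall hc1 (fun s has hsc => ?_)
          have h1 := mem_range_of_birth_le V ((hAm v).mp hvA).1 has hsc
          have h2 := mem_range_of_birth_le V ((hBm wB).mp hwB).1.le has hsc
          have h3 := mem_range_of_birth_le V ((hCm wC).mp hwC).1 has hsc
          exact birth_le V hsc (sub_mem (sub_mem h1 h2) h3)
        · exact lt_of_le_of_lt (death_le V hcc' hu) hc'2
      have hveq : v = (v - wB - wC) + wB + wC := by abel
      rw [hveq]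
      exact Submodule.add_mem _
        (Submodule.add_mem _ (Submodule.mem_sup_right huC) (Submodule.mem_sup_left hwB))
        (Submodule.mem_sup_right hwC)
    · intro h
      obtain ⟨x, hx, y, hy, hxy⟩ := Submodule.mem_sup.mp h
      have hxB' : V.map hcc' x ∈ B' :=
        (hB'm _).mpr ⟨lt_of_le_of_lt (birth_map_le V hcc' x) ((hBm x).mp hx).1,
          death_map_le_of_le V hcc' hc'2 ((hBm x).mp hx).2⟩
      have hyC' : V.map hcc' y ∈ C' :=
        (hC'm _).mpr ⟨(birth_map_le V hcc' y).trans ((hCm y).mp hy).1,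
          death_map_lt_of_lt V hcc' hc'2 ((hCm y).mp hy).2⟩
      rw [← hxy, map_add]
      exact Submodule.add_mem_sup hxB' hyC'
  exact ⟨(Submodule.quotEquivOfEq _ _ hker.symm).trans (f.quotKerEquivOfSurjective hsurj)⟩

end Stmt4Aux

/-- for a persistence module satisfying (PM1)-(PM4) and a bar `I = (a, b]`,
the subspace `A ⊆ V_c` is finite-dimensional and the multiplicity
`n_I(c) = dim A/(B + C)` is independent of the choice of `c ∈ (a, b)`. -/
theorem stmt4 (F : Type u) [Field F] (V : PersistenceModule F)
    -- (PM1): a closed, nowhere dense, bounded-below spectrum `S`, outside of which `V` is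
    -- locally constant (structure maps between points of the same connected component of
    -- `ℝ \ S` are isomorphisms).
    (S : Set ℝ) (hSclosed : IsClosed S) (hSnwd : interior (closure S) = ∅)
    (hSbdd : BddBelow S)
    (hPM1 : ∀ (s t : ℝ) (h : s ≤ t), s ∈ Sᶜ → t ∈ connectedComponentIn Sᶜ s →
      Function.Bijective (V.map h))
    -- (PM2): q-tameness.
    (hPM2 : ∀ (s t : ℝ) (h : s < t), LinearMap.rank (V.map h.le) < Cardinal.aleph0)
    -- (PM3): left-semicontinuity, i.e. the canonical map `colim_{s<t} V_s → V_t` is an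
    -- isomorphism, expressed elementwise (surjectivity and injectivity of the colimit map).
    (hPM3a : ∀ (t : ℝ) (v : V.space t), ∃ (s : ℝ) (h : s < t),
      v ∈ LinearMap.range (V.map h.le))
    (hPM3b : ∀ (s t : ℝ) (h : s < t) (v : V.space s), V.map h.le v = 0 →
      ∃ (r : ℝ) (h1 : s ≤ r), r < t ∧ V.map h1 v = 0)
    -- (PM4): boundedness from below.
    (hPM4 : ∃ s₀ : ℝ, ∀ s : ℝ, s < s₀ → ∀ v : V.space s, v = 0)
    -- the bar `I = (a, b]` and two points `c, c'` of `(a, b)`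
    (a : ℝ) (b : EReal) (hab : (a : EReal) < b)
    (c : ℝ) (hc1 : a < c) (hc2 : (c : EReal) < b)
    (c' : ℝ) (hc'1 : a < c') (hc'2 : (c' : EReal) < b)
    -- the subspaces `A`, `B`, `C` at `c` and at `c'`
    (A B C : Submodule F (V.space c))
    (hA : (A : Set (V.space c)) = {v | birth V c v ≤ (a : EReal) ∧ death V c v ≤ b})
    (hB : (B : Set (V.space c)) = {v | birth V c v < (a : EReal) ∧ death V c v ≤ b})
    (hC : (C : Set (V.space c)) = {v | birth V c v ≤ (a : EReal) ∧ death V c v < b})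
    (A' B' C' : Submodule F (V.space c'))
    (hA' : (A' : Set (V.space c')) = {v | birth V c' v ≤ (a : EReal) ∧ death V c' v ≤ b})
    (hB' : (B' : Set (V.space c')) = {v | birth V c' v < (a : EReal) ∧ death V c' v ≤ b})
    (hC' : (C' : Set (V.space c')) = {v | birth V c' v ≤ (a : EReal) ∧ death V c' v < b}) :
    FiniteDimensional F A ∧
      Module.finrank F (↥A ⧸ Submodule.comap A.subtype (B ⊔ C)) =
        Module.finrank F (↥A' ⧸ Submodule.comap A'.subtype (B' ⊔ C')) := by
  constructor
  · -- finite-dimensionality of `A`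
    have hsa : a < (a + c) / 2 := by linarith
    have hsc : (a + c) / 2 < c := by linarith
    haveI := Stmt4Aux.fd_range V hPM2 hsc
    refine Submodule.finiteDimensional_of_le
      (show A ≤ LinearMap.range (V.map hsc.le) from ?_)
    intro v hv
    exact Stmt4Aux.mem_range_of_birth_le V ((Set.ext_iff.mp hA v).mp hv).1 hsa hsc
  · rcases le_total c c' with h | h
    · obtain ⟨e⟩ := Stmt4Aux.key V hPM2 h hc1 hc'2 A B C hA hB hC A' B' C' hA' hB' hC'
      exact e.finrank_eq
    · obtain ⟨e⟩ := Stmt4Aux.key V hPM2 h hc'1 hc2 A' B' C' hA' hB' hC' A B C hA hB hC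
      exact e.finrank_eq.symm

end
end

section
/- Let (a_i, b_i], i ∈ I, be a family of intervals with a_i ∈ ℝ and b_i ∈ (a_i, ∞], and suppose that for every ε > 0 and s ∈ ℝ the set {i ∈ I : a_i < s and b_i − a_i > ε} is finite (with the convention ∞ − a = ∞); write 𝔟_ε(s) for its cardinality. Then for every ε > 0 and s ∈ ℝ there exists δ > 0 such that 𝔟_{ε′}(s′) = 𝔟_ε(s) whenever ε ≤ ε′ < ε + δ and s − δ < s′ ≤ s. In other words, 𝔟_ε(s) is right semi-continuous in ε and left semi-continuous in s. -/
/-- The barcode counting function: the number of bars `(a i, b i]` of length `> ε`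
beginning below `s`, counted with multiplicity. -/
noncomputable def bcount {I : Type*} (a : I → ℝ) (b : I → EReal) (ε s : ℝ) : ℕ :=
  {i : I | a i < s ∧ (ε : EReal) < b i - (a i : EReal)}.ncard

/-- if all the counting sets are finite, then `𝔟_ε(s)` is right
semi-continuous in `ε` and left semi-continuous in `s`: `𝔟_{ε'}(s') = 𝔟_ε(s)` whenever
`ε ≤ ε' < ε + δ` and `s - δ < s' ≤ s` for some `δ > 0`. -/
theorem stmt7 {I : Type*} (a : I → ℝ) (b : I → EReal)
    (hfin : ∀ ε : ℝ, 0 < ε → ∀ s : ℝ,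
      {i : I | a i < s ∧ (ε : EReal) < b i - (a i : EReal)}.Finite)
    (ε : ℝ) (hε : 0 < ε) (s : ℝ) :
    ∃ δ > 0, ∀ ε' s' : ℝ, ε ≤ ε' → ε' < ε + δ → s - δ < s' → s' ≤ s →
      bcount a b ε' s' = bcount a b ε s := by
  classical
  set S := {i : I | a i < s ∧ (ε : EReal) < b i - (a i : EReal)} with hS
  have hSfin := hfin ε hε s
  set F := hSfin.toFinset with hF
  have key : ∀ i : I, ∃ δ : ℝ, 0 < δ ∧
      (i ∈ F → a i < s - δ ∧ ((ε + δ : ℝ) : EReal) ≤ b i - (a i : EReal)) := by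
    intro i
    by_cases hi : i ∈ F
    · have hi' : a i < s ∧ (ε : EReal) < b i - (a i : EReal) := by
        simpa [hF, hS] using hi
      obtain ⟨z, hz1, hz2⟩ := EReal.lt_iff_exists_real_btwn.mp hi'.2
      have hz1' : ε < z := by exact_mod_cast hz1
      refine ⟨min ((s - a i) / 2) (z - ε), ?_, fun _ => ⟨?_, ?_⟩⟩
      · exact lt_min (by linarith [hi'.1]) (by linarith)
      · have : min ((s - a i) / 2) (z - ε) ≤ (s - a i) / 2 := min_le_left _ _
        linarith [hi'.1]
      · have h1 : ε + min ((s - a i) / 2) (z - ε) ≤ z := by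
          have := min_le_right ((s - a i) / 2) (z - ε); linarith
        calc ((ε + min ((s - a i) / 2) (z - ε) : ℝ) : EReal) ≤ (z : ℝ) := by
              exact_mod_cast h1
          _ ≤ b i - (a i : EReal) := le_of_lt hz2
    · exact ⟨1, one_pos, fun h => absurd h hi⟩
  choose f hf0 hfP using key
  set G : Finset ℝ := insert 1 (F.image f) with hG
  have hGne : G.Nonempty := ⟨1, Finset.mem_insert_self _ _⟩
  set δ := G.min' hGne with hδ
  have hδpos : 0 < δ := by
    rw [hδ, Finset.lt_min'_iff]
    intro x hx
    rcases Finset.mem_insert.mp hx with h | h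
    · simp [h]
    · obtain ⟨i, _, hi⟩ := Finset.mem_image.mp h
      exact hi ▸ hf0 i
  have hδle : ∀ i ∈ F, δ ≤ f i := by
    intro i hi
    apply Finset.min'_le
    exact Finset.mem_insert_of_mem (Finset.mem_image_of_mem f hi)
  refine ⟨δ, hδpos, fun ε' s' hε1 hε2 hs1 hs2 => ?_⟩
  have hseteq : {i : I | a i < s' ∧ ((ε' : ℝ) : EReal) < b i - (a i : EReal)} = S := by
    ext i
    simp only [Set.mem_setOf_eq, hS]
    constructor
    · rintro ⟨h1, h2⟩
      refine ⟨lt_of_lt_of_le h1 hs2, lt_of_le_of_lt ?_ h2⟩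
      exact_mod_cast hε1
    · rintro ⟨h1, h2⟩
      have hiF : i ∈ F := by simp [hF, hS]; exact ⟨h1, h2⟩
      obtain ⟨ha, hb⟩ := hfP i hiF
      have hδfi := hδle i hiF
      constructor
      · linarith
      · have h3 : ε' < ε + f i := by linarith
        calc ((ε' : ℝ) : EReal) < ((ε + f i : ℝ) : EReal) := by exact_mod_cast h3
          _ ≤ b i - (a i : EReal) := hb
  unfold bcount
  rw [hseteq]
end

section
/- Let S ⊆ ℝ be a closed set and let (a_i, b_i], i ∈ I, be a family of intervals with a_i ∈ S and b_i ∈ S ∪ {∞}, b_i > a_i, such that for every ε > 0 and s ∈ ℝ the set {i ∈ I : a_i < s and b_i − a_i > ε} is finite; write 𝔟_ε(s) for its cardinality. Then: (i) for every ε > 0 the function s ↦ 𝔟_ε(s) is constant on every connected component of ℝ∖S; (ii) for every s ∈ ℝ the function ε ↦ 𝔟_ε(s) is constant on every connected component of (0,∞)∖(S−S), where S−S := {x − y : x, y ∈ S}. -/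
/-- for a barcode with spectrum contained in a closed set `S ⊆ ℝ` (all left
endpoints `a i` lie in `S` and all finite right endpoints `b i` lie in `S`), the counting
function `𝔟_ε(s)`: (i) is constant in `s` on every connected component of `ℝ \ S`;
(ii) is constant in `ε` on every connected component of `(0, ∞) \ (S - S)`. -/
theorem stmt8 (S : Set ℝ) (hSclosed : IsClosed S)
    {I : Type*} (a : I → ℝ) (b : I → EReal)
    (haS : ∀ i, a i ∈ S)
    (hbS : ∀ i, b i = ⊤ ∨ ∃ r ∈ S, b i = (r : EReal))
    (hab : ∀ i, (a i : EReal) < b i)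
    (hfin : ∀ ε : ℝ, 0 < ε → ∀ s : ℝ,
      {i : I | a i < s ∧ (ε : EReal) < b i - (a i : EReal)}.Finite) :
    (∀ ε : ℝ, 0 < ε → ∀ s t : ℝ, s ∈ Sᶜ → t ∈ connectedComponentIn Sᶜ s →
      bcount a b ε s = bcount a b ε t) ∧
    (∀ s : ℝ, ∀ ε ε' : ℝ,
      ε ∈ {x : ℝ | 0 < x ∧ x ∉ {d : ℝ | ∃ u ∈ S, ∃ v ∈ S, d = u - v}} →
      ε' ∈ connectedComponentIn
        {x : ℝ | 0 < x ∧ x ∉ {d : ℝ | ∃ u ∈ S, ∃ v ∈ S, d = u - v}} ε →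
      bcount a b ε s = bcount a b ε' s) := by
  constructor
  · intro ε hε s t hs ht
    have hC : (connectedComponentIn Sᶜ s).OrdConnected :=
      (isPreconnected_connectedComponentIn).ordConnected
    have hsC : s ∈ connectedComponentIn Sᶜ s := mem_connectedComponentIn hs
    have hsub := connectedComponentIn_subset Sᶜ s
    have key : ∀ x ∈ S, (x < s ↔ x < t) := by
      intro x hx
      constructor
      · intro h1
        by_contra h2
        push_neg at h2
        exact hsub (hC.out ht hsC ⟨h2, h1.le⟩) hx
      · intro h1
        by_contra h2
        push_neg at h2
        exact hsub (hC.out hsC ht ⟨h2, h1.le⟩) hx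
    unfold bcount
    congr 1
    ext i
    simp only [Set.mem_setOf_eq]
    exact and_congr_left' (key (a i) (haS i))
  · intro s ε ε' hε hε'
    set T : Set ℝ := {x : ℝ | 0 < x ∧ x ∉ {d : ℝ | ∃ u ∈ S, ∃ v ∈ S, d = u - v}} with hT
    have hC : (connectedComponentIn T ε).OrdConnected :=
      (isPreconnected_connectedComponentIn).ordConnected
    have hεC : ε ∈ connectedComponentIn T ε := mem_connectedComponentIn hε
    have hsub := connectedComponentIn_subset T ε
    unfold bcount
    congr 1
    ext i
    simp only [Set.mem_setOf_eq]
    refine and_congr_right fun _ => ?_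
    rcases hbS i with hb | ⟨r, hrS, hb⟩
    · simp [hb, EReal.coe_lt_top]
    · have har : a i < r := by
        have := hab i
        rw [hb] at this
        exact_mod_cast this
      have hdpos : 0 < r - a i := sub_pos.mpr har
      have hdmem : r - a i ∈ {d : ℝ | ∃ u ∈ S, ∃ v ∈ S, d = u - v} :=
        ⟨r, hrS, a i, haS i, rfl⟩
      have hsubeq : b i - (a i : EReal) = ((r - a i : ℝ) : EReal) := by
        rw [hb, ← EReal.coe_sub]
      rw [hsubeq, EReal.coe_lt_coe_iff, EReal.coe_lt_coe_iff]
      constructor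
      · intro h1
        by_contra h2
        push_neg at h2
        have : r - a i ∈ connectedComponentIn T ε := hC.out hεC hε' ⟨h1.le, h2⟩
        exact (hsub this).2 hdmem
      · intro h1
        by_contra h2
        push_neg at h2
        have : r - a i ∈ connectedComponentIn T ε := hC.out hε' hεC ⟨h1.le, h2⟩
        exact (hsub this).2 hdmem
end
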